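/- Let R > 0 and ψ : [0, R) → ℝ be continuously differentiable satisfying (h1) ψ(0) > 0 and ψ′(0) = −1; (h2) ψ′ is convex and strictly increasing; (h3) ψ(t) = 0 for some t ∈ (0, R), with t⋆ := min{t ∈ [0, R) : ψ(t) = 0}. Define the Newton iteration map n_ψ(t) := t − ψ(t)/ψ′(t) for t ∈ [0, t⋆). Then for all t ∈ [0, t⋆): n_ψ(t) ∈ [0, t⋆), t < n_ψ(t), and t⋆ − n_ψ(t) ≤ (1/2)(t⋆ − t); moreover the Newton step function t ↦ −ψ(t)/ψ′(t) is decreasing on [0, t⋆). If in addition ψ is twice continuously differentiable and (h4) ψ′(t⋆) < 0 holds, then t⋆ − n_ψ(t) ≤ (ψ″(t⋆)/(−2ψ′(t⋆)))(t⋆ − t)² for all t ∈ [0, t⋆). -/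

import Mathlib

open Metric Set Filter

set_option maxHeartbeats 1000000 in
/-- Properties of the scalar Newton iteration map `n_ψ` (Lemma `eq.ratemajor`). -/
theorem stmt5 (R : ℝ) (hR : 0 < R) (ψ ψ' : ℝ → ℝ)
    (hψ1 : ∀ t ∈ Ico (0:ℝ) R, HasDerivAt ψ (ψ' t) t)
    (hψ'c : ContinuousOn ψ' (Ico (0:ℝ) R))
    (h1 : 0 < ψ 0) (h1' : ψ' 0 = -1)
    (h2a : ConvexOn ℝ (Ico (0:ℝ) R) ψ')
    (h2b : StrictMonoOn ψ' (Ico (0:ℝ) R))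
    (tstar : ℝ) (h3 : IsLeast {t ∈ Ico (0:ℝ) R | ψ t = 0} tstar)
    (nψ : ℝ → ℝ) (hnψ : ∀ t : ℝ, nψ t = t - ψ t / ψ' t) :
    (∀ t ∈ Ico (0:ℝ) tstar,
      nψ t ∈ Ico (0:ℝ) tstar ∧ t < nψ t ∧ tstar - nψ t ≤ 1 / 2 * (tstar - t)) ∧
    AntitoneOn (fun t => -(ψ t / ψ' t)) (Ico (0:ℝ) tstar) ∧
    (∀ ψ'' : ℝ → ℝ, (∀ u ∈ Ico (0:ℝ) R, HasDerivAt ψ' (ψ'' u) u) →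
      ContinuousOn ψ'' (Ico (0:ℝ) R) → ψ' tstar < 0 →
      ∀ t ∈ Ico (0:ℝ) tstar,
        tstar - nψ t ≤ ψ'' tstar / (-2 * ψ' tstar) * (tstar - t) ^ 2) := by
  obtain ⟨⟨⟨hts0, htsR⟩, hts_zero⟩, hts_lb⟩ := h3
  have hts_pos : 0 < tstar := by
    rcases hts0.lt_or_eq with h | h
    · exact h
    · exfalso; rw [← h] at hts_zero; linarith
  have hsub : Icc (0:ℝ) tstar ⊆ Ico 0 R := fun x hx => ⟨hx.1, lt_of_le_of_lt hx.2 htsR⟩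
  have hsubI : Ico (0:ℝ) tstar ⊆ Ico 0 R := fun x hx => hsub ⟨hx.1, hx.2.le⟩
  have hψc : ContinuousOn ψ (Ico 0 R) :=
    fun x hx => (hψ1 x hx).continuousAt.continuousWithinAt
  -- ψ > 0 on [0, tstar)
  have hψpos : ∀ t ∈ Ico (0:ℝ) tstar, 0 < ψ t := by
    rintro t ⟨ht0, hts⟩
    by_contra hcon
    push_neg at hcon
    have hIcc : Icc (0:ℝ) t ⊆ Ico 0 R := fun x hx =>
      ⟨hx.1, lt_of_le_of_lt hx.2 (hts.trans htsR)⟩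
    have h0 : (0:ℝ) ∈ ψ '' Icc 0 t :=
      intermediate_value_Icc' ht0 (hψc.mono hIcc) ⟨hcon, h1.le⟩
    obtain ⟨c, hc, hceq⟩ := h0
    have : tstar ≤ c := hts_lb ⟨hIcc hc, hceq⟩
    linarith [hc.2]
  -- ψ' < 0 on [0, tstar)
  have hψ'neg : ∀ t ∈ Ico (0:ℝ) tstar, ψ' t < 0 := by
    rintro t ⟨ht0, hts⟩
    by_contra hcon
    push_neg at hcon
    have hIccsub : Icc t tstar ⊆ Ico 0 R := fun x hx =>
      ⟨ht0.trans hx.1, lt_of_le_of_lt hx.2 htsR⟩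
    have hmono : StrictMonoOn ψ (Icc t tstar) := by
      apply strictMonoOn_of_deriv_pos (convex_Icc _ _) (hψc.mono hIccsub)
      intro x hx
      rw [interior_Icc] at hx
      rw [(hψ1 x (hIccsub ⟨hx.1.le, hx.2.le⟩)).deriv]
      exact lt_of_le_of_lt hcon (h2b ⟨ht0, hts.trans htsR⟩
        (hIccsub ⟨hx.1.le, hx.2.le⟩) hx.1)
    have := hmono ⟨le_refl t, hts.le⟩ ⟨hts.le, le_refl tstar⟩ hts
    rw [hts_zero] at this
    linarith [hψpos t ⟨ht0, hts⟩]
  -- ψ' tstar ≤ 0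
  have hψ'ts : ψ' tstar ≤ 0 := by
    have hcont : ContinuousWithinAt ψ' (Ico 0 tstar) tstar :=
      (hψ'c tstar ⟨hts0, htsR⟩).mono hsubI
    have hmem : tstar ∈ closure (Ico (0:ℝ) tstar) := by
      rw [closure_Ico hts_pos.ne]
      exact ⟨hts0, le_refl _⟩
    have hne : (nhdsWithin tstar (Ico (0:ℝ) tstar)).NeBot :=
      mem_closure_iff_nhdsWithin_neBot.mp hmem
    refine le_of_tendsto hcont ?_
    filter_upwards [self_mem_nhdsWithin] with x hx
    exact (hψ'neg x hx).le
  -- key strict convexity inequality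
  have hkey : ∀ t ∈ Ico (0:ℝ) tstar, ψ t + ψ' t * (tstar - t) < 0 := by
    rintro t ⟨ht0, hts⟩
    have hIccsub : Icc t tstar ⊆ Ico 0 R := fun x hx =>
      ⟨ht0.trans hx.1, lt_of_le_of_lt hx.2 htsR⟩
    obtain ⟨c, hc, hceq⟩ := exists_hasDerivAt_eq_slope ψ ψ' hts (hψc.mono hIccsub)
      (fun x hx => hψ1 x (hIccsub ⟨hx.1.le, hx.2.le⟩))
    have hlt : ψ' t < ψ' c := h2b ⟨ht0, hts.trans htsR⟩
      (hIccsub ⟨hc.1.le, hc.2.le⟩) hc.1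
    rw [hts_zero] at hceq
    have hne : tstar - t > 0 := by linarith
    have : ψ' c * (tstar - t) = 0 - ψ t := by
      rw [hceq]; field_simp
    nlinarith
  -- halving inequality
  have hhalf : ∀ t ∈ Ico (0:ℝ) tstar, (-ψ' t) * (tstar - t) ≤ 2 * ψ t := by
    rintro t ⟨ht0, hts⟩
    have htd : tstar - t > 0 := by linarith
    set q : ℝ → ℝ := fun s => ψ s + ψ' t * (tstar - s) ^ 2 / (2 * (tstar - t)) with hq_def
    have hq : ∀ s ∈ Ico (0:ℝ) R, HasDerivAt q
        (ψ' s + ψ' t * (2 * (tstar - s) ^ 1 * (-1)) / (2 * (tstar - t))) s := by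
      intro s hs
      exact (hψ1 s hs).add
        ((((((hasDerivAt_id s).const_sub tstar).pow 2).const_mul (ψ' t)).div_const
          (2 * (tstar - t))))
    have hIccsub : Icc t tstar ⊆ Ico 0 R := fun x hx =>
      ⟨ht0.trans hx.1, lt_of_le_of_lt hx.2 htsR⟩
    have hanti : AntitoneOn q (Icc t tstar) := by
      apply antitoneOn_of_deriv_nonpos (convex_Icc _ _)
      · exact fun x hx => (hq x (hIccsub hx)).continuousAt.continuousWithinAt
      · intro x hx
        rw [interior_Icc] at hx
        exact (hq x (hIccsub ⟨hx.1.le, hx.2.le⟩)).differentiableAt.differentiableWithinAt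
      · intro x hx
        rw [interior_Icc] at hx
        rw [(hq x (hIccsub ⟨hx.1.le, hx.2.le⟩)).deriv]
        have ha : (0:ℝ) ≤ (tstar - x) / (tstar - t) := by
          have h1x : (0:ℝ) < tstar - x := by linarith [hx.2]
          positivity
        have hb : (0:ℝ) ≤ (x - t) / (tstar - t) := by
          have h2x : (0:ℝ) < x - t := by linarith [hx.1]
          positivity
        have hab : (tstar - x) / (tstar - t) + (x - t) / (tstar - t) = 1 := by
          field_simp
          ring
        have hcx : ((tstar - x) / (tstar - t)) • t + ((x - t) / (tstar - t)) • tstar = x := by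
          simp only [smul_eq_mul]
          field_simp
          ring
        have hconv := h2a.2 (hsub ⟨ht0, hts.le⟩) (hsub ⟨hts0, le_refl _⟩) ha hb hab
        rw [hcx] at hconv
        simp only [smul_eq_mul] at hconv
        have h2 : ((x - t) / (tstar - t)) * ψ' tstar ≤ 0 :=
          mul_nonpos_of_nonneg_of_nonpos hb hψ'ts
        have h3 : ψ' x ≤ ((tstar - x) / (tstar - t)) * ψ' t := by linarith
        have heq : ψ' t * (2 * (tstar - x) ^ 1 * (-1)) / (2 * (tstar - t))
            = -(((tstar - x) / (tstar - t)) * ψ' t) := by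
          field_simp
        rw [heq]
        linarith
    have hres := hanti ⟨le_refl t, hts.le⟩ ⟨hts.le, le_refl tstar⟩ hts.le
    simp only [hq_def, hts_zero] at hres
    have he : (tstar - tstar : ℝ) ^ 2 = 0 := by ring
    rw [he] at hres
    have hsim : ψ' t * (tstar - t) ^ 2 / (2 * (tstar - t)) = ψ' t * (tstar - t) / 2 := by
      field_simp
    rw [hsim] at hres
    have h0 : ψ' t * 0 / (2 * (tstar - t)) = 0 := by ring
    rw [h0] at hres
    linarith
  refine ⟨?_, ?_, ?_⟩
  · rintro t ⟨ht0, hts⟩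
    have hp := hψpos t ⟨ht0, hts⟩
    have hn := hψ'neg t ⟨ht0, hts⟩
    have hB : (0:ℝ) < -ψ' t := by linarith
    have hdiv : ψ t / ψ' t = -(ψ t / (-ψ' t)) := by
      rw [div_neg, neg_neg]
    have hstep_pos : 0 < ψ t / (-ψ' t) := div_pos hp hB
    have hlt : t < nψ t := by
      rw [hnψ, hdiv]; linarith
    have hk := hkey t ⟨ht0, hts⟩
    have hub : ψ t / (-ψ' t) < tstar - t := by
      rw [div_lt_iff₀ hB]; nlinarith
    have hnlt : nψ t < tstar := by
      rw [hnψ, hdiv]; linarith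
    refine ⟨⟨by linarith, hnlt⟩, hlt, ?_⟩
    have hh := hhalf t ⟨ht0, hts⟩
    have hlb : (tstar - t) / 2 ≤ ψ t / (-ψ' t) := by
      rw [div_le_div_iff₀ (by norm_num) hB]; nlinarith
    rw [hnψ, hdiv]; linarith
  · intro a ha b hb hab
    rcases eq_or_lt_of_le hab with rfl | hab'
    · exact le_refl _
    obtain ⟨ha0, has⟩ := ha
    obtain ⟨hb0, hbs⟩ := hb
    have hpa := hψpos a ⟨ha0, has⟩
    have hpb := hψpos b ⟨hb0, hbs⟩
    have hna := hψ'neg a ⟨ha0, has⟩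
    have hnb := hψ'neg b ⟨hb0, hbs⟩
    have hIccsub : Icc a b ⊆ Ico 0 R := fun x hx =>
      ⟨ha0.trans hx.1, lt_of_le_of_lt hx.2 (hbs.trans htsR)⟩
    obtain ⟨c, hc, hceq⟩ := exists_hasDerivAt_eq_slope ψ ψ' hab' (hψc.mono hIccsub)
      (fun x hx => hψ1 x (hIccsub ⟨hx.1.le, hx.2.le⟩))
    have hclt : ψ' c < ψ' b := h2b (hIccsub ⟨hc.1.le, hc.2.le⟩)
      (hsubI ⟨hb0, hbs⟩) hc.2
    have hba : (0:ℝ) < b - a := by linarith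
    have hceq' : ψ' c * (b - a) = ψ b - ψ a := by
      rw [hceq]; field_simp
    have c1 : ψ b - ψ' b * (b - a) ≤ ψ a := by nlinarith
    have c2 : (ψ' b - ψ' a) * (tstar - b) ≤ (ψ' tstar - ψ' b) * (b - a) := by
      have hs := h2a.slope_mono_adjacent (hsubI ⟨ha0, has⟩)
        (hsub ⟨hts0, le_refl _⟩) hab' hbs
      have htb : (0:ℝ) < tstar - b := by linarith
      rw [div_le_div_iff₀ hba htb] at hs
      linarith [hs]
    have c3 : ψ b ≤ (-ψ' b) * (tstar - b) := by
      have := hkey b ⟨hb0, hbs⟩; nlinarith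
    have htb : (0:ℝ) < tstar - b := by linarith
    have hts' : (0:ℝ) ≤ ψ' tstar - ψ' b := by
      have := h2b (hsubI ⟨hb0, hbs⟩) (hsub ⟨hts0, le_refl _⟩) hbs
      linarith
    have hT : ψ b * (ψ' b - ψ' a) * (tstar - b) ≤ ψ' b ^ 2 * (b - a) * (tstar - b) := by
      nlinarith [mul_le_mul_of_nonneg_left c2 hpb.le,
        mul_le_mul_of_nonneg_right c3 (mul_nonneg hts' hba.le),
        mul_le_mul_of_nonneg_right (show ψ' tstar - ψ' b ≤ -ψ' b by linarith)
          (mul_nonneg (mul_nonneg (neg_nonneg.mpr hnb.le) hba.le) htb.le)]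
    have hPA : ψ b * (ψ' b - ψ' a) ≤ ψ' b ^ 2 * (b - a) :=
      le_of_mul_le_mul_right hT htb
    have key : ψ b * (-ψ' a) ≤ ψ a * (-ψ' b) := by
      nlinarith [hPA, mul_le_mul_of_nonneg_right c1 (neg_nonneg.mpr hnb.le)]
    show -(ψ b / ψ' b) ≤ -(ψ a / ψ' a)
    rw [← div_neg, ← div_neg]
    rw [div_le_div_iff₀ (by linarith) (by linarith)]
    exact key
  · intro ψ'' hψ''d hψ''c h4 t ht
    obtain ⟨ht0, hts⟩ := ht
    have hp := hψpos t ⟨ht0, hts⟩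
    have hn := hψ'neg t ⟨ht0, hts⟩
    have hmono0 := h2a.monotoneOn_deriv (fun x hx => (hψ''d x hx).differentiableAt)
    have hmono : MonotoneOn ψ'' (Ico 0 R) := by
      intro a ha b hb hab
      have := hmono0 ha hb hab
      rwa [(hψ''d a ha).deriv, (hψ''d b hb).deriv] at this
    have hIccsub : Icc t tstar ⊆ Ico 0 R := fun x hx =>
      ⟨ht0.trans hx.1, lt_of_le_of_lt hx.2 htsR⟩
    set r : ℝ → ℝ := fun s => ψ s - ψ' t * s - ψ'' tstar * (s - t) ^ 2 / 2 with hr_def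
    have hr : ∀ s ∈ Ico (0:ℝ) R, HasDerivAt r
        (ψ' s - ψ' t * 1 - ψ'' tstar * (2 * (s - t) ^ 1 * 1) / 2) s := by
      intro s hs
      exact (((hψ1 s hs).sub ((hasDerivAt_id s).const_mul (ψ' t))).sub
        (((((hasDerivAt_id s).sub_const t).pow 2).const_mul (ψ'' tstar)).div_const 2))
    have hanti : AntitoneOn r (Icc t tstar) := by
      apply antitoneOn_of_deriv_nonpos (convex_Icc _ _)
      · exact fun x hx => (hr x (hIccsub hx)).continuousAt.continuousWithinAt
      · intro x hx
        rw [interior_Icc] at hx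
        exact (hr x (hIccsub ⟨hx.1.le, hx.2.le⟩)).differentiableAt.differentiableWithinAt
      · intro x hx
        rw [interior_Icc] at hx
        rw [(hr x (hIccsub ⟨hx.1.le, hx.2.le⟩)).deriv]
        have hIcc2 : Icc t x ⊆ Ico 0 R := fun y hy =>
          ⟨ht0.trans hy.1, lt_of_le_of_lt hy.2 (hx.2.trans htsR)⟩
        obtain ⟨c, hc, hceq⟩ := exists_hasDerivAt_eq_slope ψ' ψ'' hx.1
          ((hψ'c.mono hIcc2)) (fun y hy => hψ''d y (hIcc2 ⟨hy.1.le, hy.2.le⟩))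
        have hcle : ψ'' c ≤ ψ'' tstar :=
          hmono (hIcc2 ⟨hc.1.le, hc.2.le⟩) (hsub ⟨hts0, le_refl _⟩)
            (by linarith [hc.2, hx.2])
        have hxt : (0:ℝ) < x - t := by linarith [hx.1]
        have hceq' : ψ'' c * (x - t) = ψ' x - ψ' t := by
          rw [hceq]; field_simp
        nlinarith
    have hres := hanti ⟨le_refl t, hts.le⟩ ⟨hts.le, le_refl tstar⟩ hts.le
    rw [hr_def] at hres
    simp only [hts_zero] at hres
    have h0t : ((t:ℝ) - t) ^ 2 = 0 := by ring
    rw [h0t] at hres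
    have hN : -ψ t - ψ' t * (tstar - t) ≤ ψ'' tstar * (tstar - t) ^ 2 / 2 := by
      nlinarith [hres]
    have hNpos : 0 ≤ -ψ t - ψ' t * (tstar - t) := by
      have := hkey t ⟨ht0, hts⟩; linarith
    have hple : ψ' t < ψ' tstar := h2b (hsubI ⟨ht0, hts⟩) (hsub ⟨hts0, le_refl _⟩) hts
    have hne : ψ' t ≠ 0 := ne_of_lt hn
    have hne2 : ψ' tstar ≠ 0 := ne_of_lt h4
    have heq : tstar - nψ t = (-ψ t - ψ' t * (tstar - t)) / (-ψ' t) := by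
      rw [hnψ]
      have hnum : (-ψ t - ψ' t * (tstar - t)) = -(ψ t + ψ' t * (tstar - t)) := by ring
      rw [hnum, neg_div_neg_eq, add_div, mul_div_cancel_left₀ _ hne]
      ring
    rw [heq]
    have h5 : (-ψ t - ψ' t * (tstar - t)) / (-ψ' t)
        ≤ (ψ'' tstar * (tstar - t) ^ 2 / 2) / (-ψ' tstar) := by
      gcongr
      · linarith
      · linarith
    refine h5.trans (le_of_eq ?_)
    field_simp
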